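/- Let G be a finite group, ω a normalized 3-cocycle on G with values in ℂˣ, and g ∈ G an element of order m. Then the m-th power of θ_g is a 2-coboundary on the centralizer C(g): there exists a map f : C(g) → ℂˣ with f(1) = 1 such that θ_g(x,y)^m = f(x)·f(y)/f(x*y) for all x, y ∈ C(g). In particular, the order of the cohomology class of θ_g in H²(C(g), ℂˣ) divides the order of g. -/

import Mathlib

/-- Conjugation: `g^x = x⁻¹ * g * x`. -/
def cjg {G : Type*} [Group G] (g x : G) : G := x⁻¹ * g * x

/-- A normalized 3-cocycle on `G` with values in `ℂˣ`. -/
def IsNormalized3Cocycle {G : Type*} [Group G] (ω : G → G → G → ℂˣ) : Prop :=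
  (∀ x y z w, ω y z w * ω x (y * z) w * ω x y z = ω (x * y) z w * ω x y (z * w)) ∧
  (∀ x y z, (x = 1 ∨ y = 1 ∨ z = 1) → ω x y z = 1)

/-- `θ_g(x,y) = ω(g,x,y)·ω(x,y,g^{xy}) / ω(x,g^x,y)`. -/
def theta {G : Type*} [Group G] (ω : G → G → G → ℂˣ) (g x y : G) : ℂˣ :=
  ω g x y * ω x y (cjg g (x * y)) / ω x (cjg g x) y

/-- `γ_g(x,y) = ω(x,y,g)·ω(g,x^g,y^g) / ω(x,g,y^g)`. -/
def gam {G : Type*} [Group G] (ω : G → G → G → ℂˣ) (g x y : G) : ℂˣ :=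
  ω x y g * ω g (cjg x g) (cjg y g) / ω x g (cjg y g)

/-- A 2-coboundary of `G` with values in `ℂˣ`. -/
def Is2Coboundary {G : Type*} [Group G] (β : G → G → ℂˣ) : Prop :=
  ∃ f : G → ℂˣ, f 1 = 1 ∧ ∀ x y, β x y = f x * f y / f (x * y)

/-- A (normalized) 2-cocycle of `G` with values in `ℂˣ`. -/
def Is2Cocycle {G : Type*} [Group G] (β : G → G → ℂˣ) : Prop :=
  (∀ x, β x 1 = 1 ∧ β 1 x = 1) ∧
  (∀ x y z, β x y * β (x * y) z = β y z * β x (y * z))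

/-- An ω-admissible pair `(τ, ν)` for a subgroup `A`. -/
def IsAdmissiblePair {G : Type*} [Group G] (ω : G → G → G → ℂˣ) (A : Subgroup G)
    (τ : A → G → ℂˣ) (ν : A → (G →* ℂˣ)) : Prop :=
  (∀ x, τ 1 x = 1) ∧ (∀ a, τ a 1 = 1) ∧
  (∀ (a : A) (x y : G), theta ω (a : G) x y = τ a x * τ a y / τ a (x * y)) ∧
  (ν 1 = 1) ∧
  (∀ (a b : A) (g : G),
    theta ω g (a : G) (b : G) * (τ a g * τ b g / τ (a * b) g)
      = ν a g * ν b g / ν (a * b) g)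

lemma cjg_eq_self {G : Type*} [Group G] {g x : G} (h : g * x = x * g) : cjg g x = g := by
  rw [cjg, mul_assoc, h, ← mul_assoc, inv_mul_cancel, one_mul]

lemma theta_one_left {G : Type*} [Group G] {ω : G → G → G → ℂˣ}
    (hω : IsNormalized3Cocycle ω) (x y : G) : theta ω 1 x y = 1 := by
  have h1 : cjg (1 : G) (x * y) = 1 := by simp [cjg, mul_assoc]
  have h2 : cjg (1 : G) x = 1 := by simp [cjg]
  rw [theta, h1, h2, hω.2 1 x y (Or.inl rfl), hω.2 x y 1 (Or.inr (Or.inr rfl)),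
    hω.2 x 1 y (Or.inr (Or.inl rfl))]
  simp

lemma gam_one_left {G : Type*} [Group G] {ω : G → G → G → ℂˣ}
    (hω : IsNormalized3Cocycle ω) (u v : G) : gam ω 1 u v = 1 := by
  have h1 : cjg u (1 : G) = u := by simp [cjg]
  have h2 : cjg v (1 : G) = v := by simp [cjg]
  rw [gam, h1, h2, hω.2 u v 1 (Or.inr (Or.inr rfl)), hω.2 1 u v (Or.inl rfl),
    hω.2 u 1 v (Or.inr (Or.inl rfl))]
  simp

lemma key_identity {G : Type*} [Group G] (ω : G → G → G → ℂˣ)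
    (hω : IsNormalized3Cocycle ω) {a b x y : G}
    (hax : a * x = x * a) (hay : a * y = y * a)
    (hbx : b * x = x * b) (hby : b * y = y * b) :
    theta ω a x y * theta ω b x y * gam ω x a b * gam ω y a b
      = theta ω (a * b) x y * gam ω (x * y) a b := by
  have hc := hω.1
  have haxy : a * (x * y) = (x * y) * a := by
    rw [← mul_assoc, hax, mul_assoc, hay, ← mul_assoc]
  have hbxy : b * (x * y) = (x * y) * b := by
    rw [← mul_assoc, hbx, mul_assoc, hby, ← mul_assoc]
  have habx : (a * b) * x = x * (a * b) := by
    rw [mul_assoc, hbx, ← mul_assoc, hax, mul_assoc]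
  have habxy : (a * b) * (x * y) = (x * y) * (a * b) := by
    rw [mul_assoc, hbxy, ← mul_assoc, haxy, mul_assoc]
  simp only [theta, gam, cjg_eq_self hax, cjg_eq_self hay, cjg_eq_self hbx,
    cjg_eq_self hby, cjg_eq_self haxy, cjg_eq_self hbxy, cjg_eq_self habx,
    cjg_eq_self habxy]
  have e1 := hc x y a b
  rw [← hay] at e1
  have e2 := hc x a y b
  rw [← hax, ← hby] at e2
  have e3 := hc x a b y
  rw [← hax] at e3
  have e4 := hc a x y b
  rw [← hby] at e4
  have e5 := hc a x b y
  rw [← hbx] at e5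
  have e6 := hc a b x y
  have E := congrArg₂ (HMul.hMul)
    (congrArg₂ (HMul.hMul) (congrArg₂ (HMul.hMul) (congrArg₂ (HMul.hMul) e1 e3) e4) e6)
    (congrArg₂ (HMul.hMul) e2.symm e5.symm)
  have main :
      (ω a x y * ω x y a / ω x a y) * (ω b x y * ω x y b / ω x b y) *
        (ω a b x * ω x a b / ω a x b) * (ω a b y * ω y a b / ω a y b) *
        ((ω (x * y) a b * ω x y (a * b)) * (ω (a * x) b y * ω x a (b * y)) *
          (ω (a * x) y b * ω a x (b * y)) * (ω (a * b) x y * ω a b (x * y)) *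
          (ω a y b * ω x (a * y) b * ω x a y * (ω x b y * ω a (b * x) y * ω a x b)))
      = (ω (a * b) x y * ω x y (a * b) / ω x (a * b) y) *
          (ω a b (x * y) * ω (x * y) a b / ω a (x * y) b) *
        ((ω y a b * ω x (a * y) b * ω x y a * (ω a b y * ω x (a * b) y * ω x a b) *
            (ω x y b * ω a (x * y) b * ω a x y) * (ω b x y * ω a (b * x) y * ω a b x)) *
          (ω (a * x) y b * ω x a (b * y) * (ω (a * x) b y * ω a x (b * y)))) := by
    apply Units.ext
    push_cast
    field_simp
  rw [E] at main
  exact mul_right_cancel main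

theorem theta_order_pow_coboundary {G : Type*} [Group G] [Finite G]
    (ω : G → G → G → ℂˣ) (hω : IsNormalized3Cocycle ω) (g : G) :
    ∃ f : ↥(Subgroup.centralizer {g}) → ℂˣ, f 1 = 1 ∧
      ∀ x y : ↥(Subgroup.centralizer {g}),
        theta ω g (x : G) (y : G) ^ (orderOf g) = f x * f y / f (x * y) := by
  refine ⟨fun x => (∏ j ∈ Finset.range (orderOf g), gam ω (x : G) g (g ^ j))⁻¹, ?_, ?_⟩
  · simp [gam_one_left hω]
  · intro x y
    have hgx : g * (x : G) = (x : G) * g :=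
      Subgroup.mem_centralizer_iff.mp x.2 g (Set.mem_singleton g)
    have hgy : g * (y : G) = (y : G) * g :=
      Subgroup.mem_centralizer_iff.mp y.2 g (Set.mem_singleton g)
    have cx : Commute g (x : G) := hgx
    have cy : Commute g (y : G) := hgy
    have ind : ∀ n : ℕ,
        theta ω g (x : G) (y : G) ^ n *
          ((∏ j ∈ Finset.range n, gam ω (x : G) g (g ^ j)) *
            (∏ j ∈ Finset.range n, gam ω (y : G) g (g ^ j)))
        = theta ω (g ^ n) (x : G) (y : G) *
            ∏ j ∈ Finset.range n, gam ω ((x : G) * (y : G)) g (g ^ j) := by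
      intro n
      induction n with
      | zero => simp [theta_one_left hω]
      | succ n ih =>
        have k := key_identity ω hω (a := g) (b := g ^ n) (x := (x : G)) (y := (y : G))
          cx.eq cy.eq ((cx.pow_left n).eq) ((cy.pow_left n).eq)
        rw [← pow_succ'] at k
        rw [Finset.prod_range_succ, Finset.prod_range_succ, Finset.prod_range_succ, pow_succ]
        calc theta ω g (x : G) (y : G) ^ n * theta ω g (x : G) (y : G) *
              ((∏ j ∈ Finset.range n, gam ω (x : G) g (g ^ j)) * gam ω (x : G) g (g ^ n) *
                ((∏ j ∈ Finset.range n, gam ω (y : G) g (g ^ j)) * gam ω (y : G) g (g ^ n)))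
            = theta ω g (x : G) (y : G) ^ n *
                ((∏ j ∈ Finset.range n, gam ω (x : G) g (g ^ j)) *
                  (∏ j ∈ Finset.range n, gam ω (y : G) g (g ^ j))) *
                (theta ω g (x : G) (y : G) * gam ω (x : G) g (g ^ n) *
                  gam ω (y : G) g (g ^ n)) := by
              apply Units.ext; push_cast; ring
          _ = theta ω (g ^ n) (x : G) (y : G) *
                (∏ j ∈ Finset.range n, gam ω ((x : G) * (y : G)) g (g ^ j)) *
                (theta ω g (x : G) (y : G) * gam ω (x : G) g (g ^ n) *
                  gam ω (y : G) g (g ^ n)) := by rw [ih]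
          _ = (theta ω g (x : G) (y : G) * theta ω (g ^ n) (x : G) (y : G) *
                gam ω (x : G) g (g ^ n) * gam ω (y : G) g (g ^ n)) *
                (∏ j ∈ Finset.range n, gam ω ((x : G) * (y : G)) g (g ^ j)) := by
              apply Units.ext; push_cast; ring
          _ = (theta ω (g ^ (n + 1)) (x : G) (y : G) *
                gam ω ((x : G) * (y : G)) g (g ^ n)) *
                (∏ j ∈ Finset.range n, gam ω ((x : G) * (y : G)) g (g ^ j)) := by rw [k]
          _ = theta ω (g ^ (n + 1)) (x : G) (y : G) *
                ((∏ j ∈ Finset.range n, gam ω ((x : G) * (y : G)) g (g ^ j)) *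
                  gam ω ((x : G) * (y : G)) g (g ^ n)) := by
              apply Units.ext; push_cast; ring
    have hm := ind (orderOf g)
    rw [pow_orderOf_eq_one g, theta_one_left hω, one_mul] at hm
    simp only [MulMemClass.coe_mul]
    set T := theta ω g (x : G) (y : G)
    set Px := ∏ j ∈ Finset.range (orderOf g), gam ω (x : G) g (g ^ j)
    set Py := ∏ j ∈ Finset.range (orderOf g), gam ω (y : G) g (g ^ j)
    set Pxy := ∏ j ∈ Finset.range (orderOf g), gam ω ((x : G) * (y : G)) g (g ^ j)
    have hm' := congrArg Units.val hm
    push_cast at hm'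
    apply Units.ext
    push_cast
    field_simp
    linear_combination hm'
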